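/- Let D and G be probability distributions on a finite set Y with e^{-c}·(D(S) − γ) ≤ G(S) for all S ⊆ Y, where c, γ ≥ 0. Suppose X ~ Bernoulli(1/2), and Y' ~ D if X=1, Y' ~ G if X=0. Then there exists a randomized function E: Y → {0,1} such that (i) P[X=1, E(Y')=1 | Y'=y] ≤ e^c/(1+e^c) for all y with D(y)+G(y)>0, (ii) E_{Y~D}[E(Y)] ≥ 1−γ, and (iii) E_{Y~G}[E(Y)] ≥ 1−γ. -/
import Mathlib


/-- Bayesian decomposition lemma (pure case): if `G` is `(c,γ)`-close to `D`
(set-wise `e^{-c}·(D(S) − γ) ≤ G(S)`), then there is a randomized detector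
`E : Y → {0,1}` (given by its acceptance probability `e`) such that for every `y`,
`P[X=1, E(Y')=1 | Y'=y] ≤ e^c/(1+e^c)` and `E[E] ≥ 1−γ` under both `D` and `G`. -/
theorem stmt_14 {Y : Type*} [Fintype Y] (c γ : ℝ) (hc : 0 ≤ c) (hγ : 0 ≤ γ)
    (D G : Y → ℝ) (hD0 : ∀ y, 0 ≤ D y) (hG0 : ∀ y, 0 ≤ G y)
    (hD1 : ∑ y, D y = 1) (hG1 : ∑ y, G y = 1)
    (hclose : ∀ S : Finset Y, Real.exp (-c) * ((∑ y ∈ S, D y) - γ) ≤ ∑ y ∈ S, G y) :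
    ∃ e : Y → ℝ, (∀ y, 0 ≤ e y ∧ e y ≤ 1) ∧
      (∀ y, 0 < D y + G y →
        (1 / 2 * D y * e y) / (1 / 2 * D y + 1 / 2 * G y)
          ≤ Real.exp c / (1 + Real.exp c)) ∧
      1 - γ ≤ ∑ y, D y * e y ∧ 1 - γ ≤ ∑ y, G y * e y := by
  classical
  set E := Real.exp c with hE
  have hE1 : 1 ≤ E := Real.one_le_exp hc
  have hEpos : 0 < E := Real.exp_pos c
  set S : Finset Y := Finset.univ.filter (fun y => E * G y < D y) with hS
  have key : ∑ y ∈ S, (D y - E * G y) ≤ γ := by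
    have h := hclose S
    rw [Real.exp_neg, ← hE] at h
    have h2 : (∑ y ∈ S, D y) - γ ≤ E * ∑ y ∈ S, G y := by
      rw [inv_mul_le_iff₀ hEpos] at h
      exact h
    rw [Finset.sum_sub_distrib, ← Finset.mul_sum]
    linarith
  set f : Y → ℝ := fun y => if E * G y < D y then D y - E * G y else 0 with hf
  have hfsum : ∑ y, f y ≤ γ := by
    rw [hf]
    rw [← Finset.sum_filter]
    exact key
  refine ⟨fun y => if E * G y < D y then E * G y / D y else 1, ?_, ?_, ?_, ?_⟩
  · intro y
    by_cases h : E * G y < D y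
    · have hDpos : 0 < D y := lt_of_le_of_lt (mul_nonneg hEpos.le (hG0 y)) h
      simp only [h, if_true]
      exact ⟨div_nonneg (mul_nonneg hEpos.le (hG0 y)) hDpos.le, (div_le_one hDpos).mpr h.le⟩
    · simp [h]
  · intro y hy
    have hden : 0 < 1 / 2 * D y + 1 / 2 * G y := by linarith
    have hden2 : 0 < 1 + E := by linarith
    rw [div_le_div_iff₀ hden hden2]
    by_cases h : E * G y < D y
    · have hDpos : 0 < D y := lt_of_le_of_lt (mul_nonneg hEpos.le (hG0 y)) h
      simp only [h, if_true]
      have : D y * (E * G y / D y) = E * G y := by field_simp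
      have hGy := hG0 y
      nlinarith [mul_le_mul_of_nonneg_left h.le hEpos.le]
    · simp only [h, if_false]
      push_neg at h
      have hDy := hD0 y
      nlinarith [mul_le_mul_of_nonneg_left (hD0 y) (sub_nonneg.mpr hE1)]
  · have hpt : ∀ y, D y - f y ≤ D y * (if E * G y < D y then E * G y / D y else 1) := by
      intro y
      by_cases h : E * G y < D y
      · have hDpos : 0 < D y := lt_of_le_of_lt (mul_nonneg hEpos.le (hG0 y)) h
        simp only [hf]
        rw [if_pos h, if_pos h]
        have heq : D y * (E * G y / D y) = E * G y := by field_simp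
        rw [heq]
        linarith
      · simp [hf, h]
    calc 1 - γ ≤ ∑ y, (D y - f y) := by
          rw [Finset.sum_sub_distrib, hD1]; linarith
      _ ≤ _ := Finset.sum_le_sum fun y _ => hpt y
  · have hpt : ∀ y, G y - f y ≤ G y * (if E * G y < D y then E * G y / D y else 1) := by
      intro y
      by_cases h : E * G y < D y
      · have hDpos : 0 < D y := lt_of_le_of_lt (mul_nonneg hEpos.le (hG0 y)) h
        simp only [hf]
        rw [if_pos h, if_pos h]
        have hGE : G y ≤ E * G y := by nlinarith [hG0 y]
        rw [mul_div_assoc' (G y), le_div_iff₀ hDpos]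
        nlinarith [mul_nonneg (sub_nonneg.mpr (hGE.trans h.le)) (sub_nonneg.mpr h.le)]
      · simp [hf, h]
    calc 1 - γ ≤ ∑ y, (G y - f y) := by
          rw [Finset.sum_sub_distrib, hG1]; linarith
      _ ≤ _ := Finset.sum_le_sum fun y _ => hpt y
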